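/- Suppose each layer's centrality matrix C^(t) is column-stochastic with strictly positive entries and à is irreducible nonnegative. Then in the weak-coupling limit ω → 0⁺, the 1-norm-normalized dominant right eigenvector of C(ω) converges to Σ_t α_t · (e^(t) ⊗ v^(1,t)), where v^(1,t) is the PageRank vector of layer t (dominant right eigenvector of C^(t), normalized to sum 1) and α is the 1-norm-normalized dominant eigenvector of the T×T matrix X with entries X_{tt'} = Ã_{tt'} · ⟨u^(1,t), v^(1,t')⟩ / ⟨u^(1,t), v^(1,t)⟩, where u^(1,t) is the dominant left eigenvector of C^(t). -/

import Mathlib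

open Matrix Filter

def IsIrreducibleMat {n : Type*} [Fintype n] [DecidableEq n] (M : Matrix n n ℝ) : Prop :=
  ∀ i j, ∃ k : ℕ, 0 < (M ^ k) i j

def IsEigC {n : Type*} [Fintype n] (M : Matrix n n ℝ) (μ : ℂ) : Prop :=
  ∃ v : n → ℂ, v ≠ 0 ∧ (M.map Complex.ofReal).mulVec v = μ • v

/-- The supracentrality matrix `C(ω) = Ĉ + ω (Ã ⊗ I_N)`. -/
def supraMat {N T : ℕ} (C : Fin T → Matrix (Fin N) (Fin N) ℝ)
    (Atil : Matrix (Fin T) (Fin T) ℝ) (ω : ℝ) :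
    Matrix (Fin T × Fin N) (Fin T × Fin N) ℝ :=
  Matrix.of fun p q =>
    (if p.1 = q.1 then C p.1 p.2 q.2 else 0) +
      ω * Atil p.1 q.1 * (if p.2 = q.2 then 1 else 0)

namespace WCL

attribute [local instance] Matrix.linftyOpNormedRing Matrix.linftyOpNormedAlgebra

variable {n : Type*} [Fintype n] [DecidableEq n]

lemma pow_entry_nonneg {M : Matrix n n ℝ} (hM : ∀ i j, 0 ≤ M i j) (k : ℕ) :
    ∀ i j, 0 ≤ (M ^ k) i j := by
  induction k with
  | zero => intro i j; rw [pow_zero, Matrix.one_apply]; positivity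
  | succ k ih =>
      intro i j
      rw [pow_succ, Matrix.mul_apply]
      exact Finset.sum_nonneg fun l _ => mul_nonneg (ih i l) (hM l j)

lemma map_pow' (M : Matrix n n ℝ) (k : ℕ) :
    (M.map Complex.ofReal) ^ k = (M ^ k).map Complex.ofReal := by
  have h : (M.map Complex.ofReal) = M.map Complex.ofRealHom := rfl
  induction k with
  | zero => simp [Matrix.map_one]
  | succ k ih =>
      have hm : ((M ^ k) * M).map (Complex.ofRealHom : ℝ →+* ℂ) =
          (M ^ k).map Complex.ofRealHom * M.map Complex.ofRealHom := Matrix.map_mul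
      rw [pow_succ, pow_succ, ih]
      exact hm.symm

lemma mulVec_pos {Q : Matrix n n ℝ} (hQ : ∀ i j, 0 < Q i j) {y : n → ℝ}
    (hy : ∀ i, 0 ≤ y i) (hy0 : y ≠ 0) (i : n) : 0 < (Q.mulVec y) i := by
  obtain ⟨j, hj⟩ := Function.ne_iff.mp hy0
  have hyj : 0 < y j := lt_of_le_of_ne (hy j) (Ne.symm hj)
  rw [Matrix.mulVec, dotProduct]
  exact Finset.sum_pos' (fun l _ => mul_nonneg (hQ i l).le (hy l))
    ⟨j, Finset.mem_univ j, mul_pos (hQ i j) hyj⟩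

lemma mulVec_mono {A : Matrix n n ℝ} (hA : ∀ i j, 0 ≤ A i j) {x y : n → ℝ}
    (hxy : ∀ i, x i ≤ y i) (i : n) : (A.mulVec x) i ≤ (A.mulVec y) i := by
  simp only [Matrix.mulVec, dotProduct]
  exact Finset.sum_le_sum fun j _ => mul_le_mul_of_nonneg_left (hxy j) (hA i j)

lemma pow_mulVec_eig {M : Matrix n n ℝ} {γ : ℝ} {y : n → ℝ}
    (h : M.mulVec y = γ • y) (k : ℕ) : (M ^ k).mulVec y = γ ^ k • y := by
  induction k with
  | zero => simp
  | succ k ih =>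
      rw [pow_succ, ← Matrix.mulVec_mulVec, h, Matrix.mulVec_smul, ih, smul_smul, pow_succ]
      ring_nf

/-- The auxiliary strictly positive polynomial `Q = ∑_{k<K} M^k`. -/
lemma exists_K {M : Matrix n n ℝ} (hM : ∀ i j, 0 ≤ M i j) (hirr : IsIrreducibleMat M) :
    ∃ K : ℕ, 0 < K ∧ ∀ i j, 0 < (∑ k ∈ Finset.range K, M ^ k) i j := by
  classical
  set g : n × n → ℕ := fun p => (hirr p.1 p.2).choose with hg
  refine ⟨(Finset.univ.sup g) + 1, Nat.succ_pos _, fun i j => ?_⟩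
  have hmem : g (i, j) ∈ Finset.range ((Finset.univ.sup g) + 1) := by
    rw [Finset.mem_range, Nat.lt_succ_iff]
    exact Finset.le_sup (Finset.mem_univ (i, j))
  rw [Matrix.sum_apply]
  refine Finset.sum_pos' (fun k _ => pow_entry_nonneg hM k i j) ⟨g (i, j), hmem, ?_⟩
  exact (hirr i j).choose_spec

lemma isEigC_of_real {M : Matrix n n ℝ} {γ : ℝ} {y : n → ℝ} (hy0 : y ≠ 0)
    (h : M.mulVec y = γ • y) : IsEigC M (γ : ℂ) := by
  refine ⟨fun i => (y i : ℂ), ?_, ?_⟩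
  · intro hz
    apply hy0
    funext i
    have := congrFun hz i
    simpa using this
  · funext i
    have hre := congrFun h i
    simp only [Matrix.mulVec, dotProduct, Pi.smul_apply, smul_eq_mul] at hre ⊢
    calc ∑ x, (M.map Complex.ofReal) i x * (y x : ℂ)
        = ((∑ x, M i x * y x : ℝ) : ℂ) := by
          push_cast [Matrix.map_apply]; rfl
      _ = ((γ * y i : ℝ) : ℂ) := by rw [hre]
      _ = (γ : ℂ) * (y i : ℂ) := by push_cast; rfl

/-- Dominance: a nonnegative matrix with a strictly positive eigenvector with
eigenvalue `lam` has all complex eigenvalues of modulus at most `lam`. -/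
lemma dominance [Nonempty n] {M : Matrix n n ℝ} (hM : ∀ i j, 0 ≤ M i j) {w : n → ℝ}
    (hw : ∀ i, 0 < w i) {lam : ℝ} (heig : M.mulVec w = lam • w) :
    ∀ μ : ℂ, IsEigC M μ → ‖μ‖ ≤ lam := by
  rintro μ ⟨z, hz0, hz⟩
  obtain ⟨i0, -, hi0⟩ := Finset.exists_max_image Finset.univ
    (fun i => ‖z i‖ / w i) ⟨Classical.arbitrary n, Finset.mem_univ _⟩
  set r := ‖z i0‖ / w i0 with hr
  have hrpos : 0 < r := by
    obtain ⟨j, hj⟩ := Function.ne_iff.mp hz0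
    have h1 : 0 < ‖z j‖ / w j := div_pos (by simpa using hj) (hw j)
    exact lt_of_lt_of_le h1 (hi0 j (Finset.mem_univ j))
  have hle : ∀ j, ‖z j‖ ≤ r * w j := fun j => by
    have := hi0 j (Finset.mem_univ j)
    rwa [div_le_iff₀ (hw j)] at this
  have h6 : r * w i0 = ‖z i0‖ := div_mul_cancel₀ _ (hw i0).ne'
  have h2 : μ * z i0 = ∑ j, (M i0 j : ℂ) * z j := by
    have := congrFun hz i0
    simp only [Matrix.mulVec, dotProduct, Pi.smul_apply, smul_eq_mul,
      Matrix.map_apply] at this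
    exact this.symm
  have key : ‖μ‖ * ‖z i0‖ ≤ lam * ‖z i0‖ := by
    calc ‖μ‖ * ‖z i0‖ = ‖μ * z i0‖ := (norm_mul _ _).symm
      _ = ‖∑ j, (M i0 j : ℂ) * z j‖ := by rw [h2]
      _ ≤ ∑ j, ‖(M i0 j : ℂ) * z j‖ := by
          simpa using
            norm_sum_le Finset.univ (fun j => (M i0 j : ℂ) * z j)
      _ ≤ ∑ j, M i0 j * (r * w j) := Finset.sum_le_sum fun j _ => by
          rw [norm_mul, Complex.norm_real, Real.norm_of_nonneg (hM i0 j)]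
          exact mul_le_mul_of_nonneg_left (hle j) (hM i0 j)
      _ = r * ∑ j, M i0 j * w j := by rw [Finset.mul_sum]; exact Finset.sum_congr rfl (fun j _ => by ring)
      _ = r * (lam * w i0) := by
          have h5 : (M.mulVec w) i0 = lam * w i0 := by rw [heig]; rfl
          rw [show ∑ j, M i0 j * w j = (M.mulVec w) i0 from rfl, h5]
      _ = lam * (r * w i0) := by ring
      _ = lam * ‖z i0‖ := by rw [h6]
  have habs : 0 < ‖z i0‖ := by rw [← h6]; exact mul_pos hrpos (hw i0)
  exact le_of_mul_le_mul_right key habs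

lemma spectrum_iff {M : Matrix n n ℝ} {μ : ℂ} :
    μ ∈ spectrum ℂ (M.map Complex.ofReal) ↔ IsEigC M μ := by
  constructor
  · intro h
    rw [spectrum.mem_iff] at h
    rw [Matrix.isUnit_iff_isUnit_det, isUnit_iff_ne_zero, Ne, not_not] at h
    obtain ⟨v, hv, hveq⟩ := Matrix.exists_mulVec_eq_zero_iff.mpr h
    refine ⟨v, hv, ?_⟩
    rw [Matrix.sub_mulVec, Algebra.algebraMap_eq_smul_one, Matrix.smul_mulVec,
      Matrix.one_mulVec, sub_eq_zero] at hveq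
    exact hveq.symm
  · rintro ⟨v, hv, h⟩
    rw [spectrum.mem_iff]
    intro hU
    rw [Matrix.isUnit_iff_isUnit_det] at hU
    have hdet : (algebraMap ℂ (Matrix n n ℂ) μ - M.map Complex.ofReal).det = 0 := by
      rw [← Matrix.exists_mulVec_eq_zero_iff]
      refine ⟨v, hv, ?_⟩
      rw [Matrix.sub_mulVec, Algebra.algebraMap_eq_smul_one, Matrix.smul_mulVec,
        Matrix.one_mulVec, h, sub_self]
    rw [hdet] at hU
    exact (isUnit_iff_ne_zero.mp hU) rfl

/-- A nonnegative matrix whose complex eigenvalues are all bounded by `ρ` cannot have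
powers growing like `r ^ k` with `r > ρ`. -/
lemma no_growth [Nonempty n] {M : Matrix n n ℝ} {ρ c r : ℝ}
    (hρ0 : 0 ≤ ρ) (hρ : ∀ μ : ℂ, IsEigC M μ → ‖μ‖ ≤ ρ) (hc : 0 < c) (hr : ρ < r)
    (hgrow : ∀ k : ℕ, r ^ k * c ≤ ‖(M.map Complex.ofReal) ^ k‖) : False := by
  set Mc := M.map Complex.ofReal with hMc
  have hsr : spectralRadius ℂ Mc ≤ ENNReal.ofReal ρ := by
    rw [spectralRadius]
    refine iSup₂_le fun μ hμ => ?_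
    rw [ENNReal.ofReal, ENNReal.coe_le_coe, ← NNReal.coe_le_coe, coe_nnnorm,
      Real.coe_toNNReal _ hρ0]
    exact hρ μ (spectrum_iff.mp hμ)
  set r' : ℝ := (ρ + r) / 2 with hr'
  have hr'pos : 0 < r' := by rw [hr']; linarith
  have hr'r : r' < r := by rw [hr']; linarith
  have hrpos : 0 < r := lt_of_le_of_lt hρ0 hr
  have hlt : spectralRadius ℂ Mc < ENNReal.ofReal r' :=
    lt_of_le_of_lt hsr (by rw [ENNReal.ofReal_lt_ofReal_iff hr'pos]; rw [hr']; linarith)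
  have T := spectrum.pow_nnnorm_pow_one_div_tendsto_nhds_spectralRadius Mc
  have ev1 : ∀ᶠ k : ℕ in atTop, (‖Mc ^ k‖₊ : ENNReal) ^ (1 / (k : ℝ)) < ENNReal.ofReal r' :=
    T.eventually_lt_const hlt
  have ev2 : ∀ᶠ k : ℕ in atTop, (r' / r) ^ k < c := by
    have h01 : (0:ℝ) ≤ r' / r := le_of_lt (div_pos hr'pos hrpos)
    have h1 : r' / r < 1 := (div_lt_one hrpos).mpr hr'r
    exact (tendsto_pow_atTop_nhds_zero_of_lt_one h01 h1).eventually_lt_const hc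
  obtain ⟨k, hk1, hkev1, hkev2⟩ :=
    ((eventually_ge_atTop 1).and (ev1.and ev2)).exists
  -- convert hkev1 to a real inequality ‖Mc ^ k‖ < r' ^ k
  have hk0 : (k : ℝ) ≠ 0 := by exact_mod_cast Nat.one_le_iff_ne_zero.mp hk1
  have hnn : ‖Mc ^ k‖₊ ^ ((1 : ℝ) / k) < r'.toNNReal := by
    have h1 : ((‖Mc ^ k‖₊ ^ ((1 : ℝ) / k) : NNReal) : ENNReal) < ENNReal.ofReal r' := by
      rw [ENNReal.coe_rpow_of_nonneg _ (by positivity : (0:ℝ) ≤ 1 / k)]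
      exact hkev1
    rw [ENNReal.ofReal, ENNReal.coe_lt_coe] at h1
    exact h1
  have hpow : ‖Mc ^ k‖₊ < r'.toNNReal ^ k := by
    have h2 := NNReal.rpow_lt_rpow hnn (by positivity : (0:ℝ) < (k:ℝ))
    rw [← NNReal.rpow_natCast (r'.toNNReal) k]
    rw [← NNReal.rpow_mul, one_div_mul_cancel hk0, NNReal.rpow_one] at h2
    exact h2
  have hreal : ‖Mc ^ k‖ < r' ^ k := by
    have h3 : (‖Mc ^ k‖₊ : ℝ) < ((r'.toNNReal ^ k : NNReal) : ℝ) := by exact_mod_cast hpow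
    rw [coe_nnnorm] at h3
    rwa [NNReal.coe_pow, Real.coe_toNNReal _ hr'pos.le] at h3
  have hcon : c < (r' / r) ^ k := by
    have h4 : r ^ k * c < r' ^ k := lt_of_le_of_lt (hgrow k) hreal
    rw [div_pow, lt_div_iff₀ (by positivity : (0:ℝ) < r ^ k), mul_comm]
    exact h4
  exact absurd hkev2 (not_lt.mpr hcon.le)

theorem perron [Nonempty n] {M : Matrix n n ℝ} (hM : ∀ i j, 0 ≤ M i j)
    (hirr : IsIrreducibleMat M) :
    ∃ (lam : ℝ) (w : n → ℝ), 0 ≤ lam ∧ (∀ i, 0 < w i) ∧ (∑ i, w i = 1) ∧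
      M.mulVec w = lam • w ∧ (∀ μ : ℂ, IsEigC M μ → ‖μ‖ ≤ lam) ∧
      ∀ (γ : ℝ) (y : n → ℝ), (∀ i, 0 ≤ y i) → y ≠ 0 → M.mulVec y = γ • y →
        γ = lam ∧ y = fun i => (∑ j, y j) * w i := by
  classical
  obtain ⟨K, hKpos, hQpos⟩ := exists_K hM hirr
  set Q : Matrix n n ℝ := ∑ k ∈ Finset.range K, M ^ k with hQdef
  have hMQ : M * Q = Q * M := by
    rw [hQdef, Finset.mul_sum, Finset.sum_mul]
    exact Finset.sum_congr rfl fun k _ => (pow_mul_comm' M k).symm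
  have sum_mulVec : ∀ x : n → ℝ, (∑ k ∈ Finset.range K, M ^ k).mulVec x
      = ∑ k ∈ Finset.range K, (M ^ k).mulVec x := by
    intro x
    funext i
    simp only [Matrix.mulVec, dotProduct, Matrix.sum_apply, Finset.sum_mul,
      Finset.sum_apply]
    exact Finset.sum_comm
  have hQeig : ∀ {γ : ℝ} {x : n → ℝ}, M.mulVec x = γ • x →
      Q.mulVec x = (∑ k ∈ Finset.range K, γ ^ k) • x := by
    intro γ x h
    rw [hQdef, sum_mulVec, Finset.sum_smul]
    exact Finset.sum_congr rfl fun k _ => pow_mulVec_eig h k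
  have hcomm : ∀ x : n → ℝ, M.mulVec (Q.mulVec x) = Q.mulVec (M.mulVec x) := by
    intro x
    rw [Matrix.mulVec_mulVec, Matrix.mulVec_mulVec, hMQ]
  -- a complex eigenvalue of maximal modulus
  set Mc := M.map Complex.ofReal with hMcdef
  have hspec : (spectrum ℂ Mc).Nonempty := spectrum.nonempty Mc
  obtain ⟨μ0, hμ0mem, hμ0max⟩ :=
    (spectrum.isCompact Mc).exists_isMaxOn hspec continuous_norm.continuousOn
  obtain ⟨z, hz0, hz⟩ := spectrum_iff.mp hμ0mem
  set ρ := ‖μ0‖ with hρdef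
  have hρ0 : 0 ≤ ρ := norm_nonneg μ0
  have hρmax : ∀ μ : ℂ, IsEigC M μ → ‖μ‖ ≤ ρ := fun μ hμ =>
    hμ0max (spectrum_iff.mpr hμ)
  set y : n → ℝ := fun i => ‖z i‖ with hydef
  have hy : ∀ i, 0 ≤ y i := fun i => norm_nonneg _
  have hy0 : y ≠ 0 := by
    intro h
    apply hz0
    funext i
    have := congrFun h i
    simpa [hydef] using this
  have hkey : ∀ i, ρ * y i ≤ (M.mulVec y) i := by
    intro i
    have h2 : μ0 * z i = ∑ j, (M i j : ℂ) * z j := by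
      have := congrFun hz i
      simp only [Matrix.mulVec, dotProduct, Pi.smul_apply, smul_eq_mul,
        Matrix.map_apply] at this
      exact this.symm
    calc ρ * y i = ‖μ0 * z i‖ := by rw [norm_mul]
      _ = ‖∑ j, (M i j : ℂ) * z j‖ := by rw [h2]
      _ ≤ ∑ j, ‖(M i j : ℂ) * z j‖ := by
          simpa using
            norm_sum_le Finset.univ (fun j => (M i j : ℂ) * z j)
      _ = ∑ j, M i j * y j := Finset.sum_congr rfl fun j _ => by
          rw [norm_mul, Complex.norm_real, Real.norm_of_nonneg (hM i j)]
      _ = (M.mulVec y) i := rfl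
  have hMy : M.mulVec y = ρ • y := by
    by_contra hne
    set d : n → ℝ := fun i => (M.mulVec y) i - ρ * y i with hddef
    have hd : ∀ i, 0 ≤ d i := fun i => sub_nonneg.mpr (hkey i)
    have hd0 : d ≠ 0 := by
      intro h
      apply hne
      funext i
      have := congrFun h i
      simp only [hddef, Pi.zero_apply, sub_eq_zero] at this
      simpa [Pi.smul_apply, smul_eq_mul] using this
    set w0 := Q.mulVec y with hw0def
    have hw0 : ∀ i, 0 < w0 i := mulVec_pos hQpos hy hy0
    have hQd : ∀ i, 0 < (Q.mulVec d) i := mulVec_pos hQpos hd hd0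
    have hMw0 : ∀ i, (M.mulVec w0) i = ρ * w0 i + (Q.mulVec d) i := by
      intro i
      have h5 : M.mulVec y = ρ • y + d := by
        funext j
        simp [hddef]
      have h6 : M.mulVec w0 = ρ • w0 + Q.mulVec d := by
        rw [hw0def, hcomm, h5, Matrix.mulVec_add, Matrix.mulVec_smul]
      rw [h6]
      simp
    obtain ⟨i1, -, hi1⟩ := Finset.exists_min_image Finset.univ
      (fun i => (Q.mulVec d) i / w0 i) ⟨Classical.arbitrary n, Finset.mem_univ _⟩
    set ε := (Q.mulVec d) i1 / w0 i1 with hεdef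
    have hε : 0 < ε := div_pos (hQd i1) (hw0 i1)
    have hrw : ∀ i, (ρ + ε) * w0 i ≤ (M.mulVec w0) i := by
      intro i
      rw [hMw0 i, add_mul]
      have : ε * w0 i ≤ (Q.mulVec d) i := by
        have h7 := hi1 i (Finset.mem_univ i)
        rw [hεdef] at h7 ⊢
        calc ((Q.mulVec d) i1 / w0 i1) * w0 i ≤ ((Q.mulVec d) i / w0 i) * w0 i :=
              mul_le_mul_of_nonneg_right h7 (hw0 i).le
          _ = (Q.mulVec d) i := div_mul_cancel₀ _ (hw0 i).ne'
      linarith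
    have hiter : ∀ k : ℕ, ∀ i, (ρ + ε) ^ k * w0 i ≤ ((M ^ k).mulVec w0) i := by
      intro k
      induction k with
      | zero => intro i; simp [Matrix.one_mulVec]
      | succ k ih =>
          intro i
          have h8 : ((M ^ (k+1)).mulVec w0) i = ((M ^ k).mulVec (M.mulVec w0)) i := by
            rw [pow_succ, ← Matrix.mulVec_mulVec]
          rw [h8]
          have h9 : ((M ^ k).mulVec ((ρ + ε) • w0)) i ≤ ((M ^ k).mulVec (M.mulVec w0)) i :=
            mulVec_mono (pow_entry_nonneg hM k) (fun j => hrw j) i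
          have h10 : ((M ^ k).mulVec ((ρ + ε) • w0)) i = (ρ + ε) * ((M ^ k).mulVec w0) i := by
            rw [Matrix.mulVec_smul]; rfl
          have h11 : (ρ + ε) ^ (k+1) * w0 i = (ρ + ε) * ((ρ + ε) ^ k * w0 i) := by ring
          rw [h11]
          calc (ρ + ε) * ((ρ + ε) ^ k * w0 i) ≤ (ρ + ε) * ((M ^ k).mulVec w0) i :=
                mul_le_mul_of_nonneg_left (ih i) (by positivity)
            _ = ((M ^ k).mulVec ((ρ + ε) • w0)) i := h10.symm
            _ ≤ _ := h9
    -- norm lower bound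
    obtain ⟨im, -, him⟩ := Finset.exists_max_image Finset.univ w0
      ⟨Classical.arbitrary n, Finset.mem_univ _⟩
    set i₀ := Classical.arbitrary n
    have hgrow : ∀ k : ℕ, (ρ + ε) ^ k * (w0 i₀ / w0 im) ≤ ‖Mc ^ k‖ := by
      intro k
      have hrow : ∑ j, ‖(Mc ^ k) i₀ j‖₊ ≤ ‖Mc ^ k‖₊ := by
        rw [Matrix.linfty_opNNNorm_def]
        exact Finset.le_sup (f := fun i => ∑ j, ‖(Mc ^ k) i j‖₊) (Finset.mem_univ i₀)
      have hentry : ∀ j, ‖(Mc ^ k) i₀ j‖ = (M ^ k) i₀ j := by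
        intro j
        rw [hMcdef, map_pow', Matrix.map_apply, Complex.norm_real,
          Real.norm_of_nonneg (pow_entry_nonneg hM k i₀ j)]
      have hrowR : ∑ j, (M ^ k) i₀ j ≤ ‖Mc ^ k‖ := by
        calc ∑ j, (M ^ k) i₀ j = ∑ j, ‖(Mc ^ k) i₀ j‖ := by
              exact Finset.sum_congr rfl fun j _ => (hentry j).symm
          _ = ((∑ j, ‖(Mc ^ k) i₀ j‖₊ : NNReal) : ℝ) := by push_cast; rfl
          _ ≤ ((‖Mc ^ k‖₊ : NNReal) : ℝ) := by exact_mod_cast hrow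
          _ = ‖Mc ^ k‖ := rfl
      have hsum : (ρ + ε) ^ k * w0 i₀ ≤ (∑ j, (M ^ k) i₀ j) * w0 im := by
        calc (ρ + ε) ^ k * w0 i₀ ≤ ((M ^ k).mulVec w0) i₀ := hiter k i₀
          _ = ∑ j, (M ^ k) i₀ j * w0 j := rfl
          _ ≤ ∑ j, (M ^ k) i₀ j * w0 im := Finset.sum_le_sum fun j _ =>
              mul_le_mul_of_nonneg_left (him j (Finset.mem_univ j))
                (pow_entry_nonneg hM k i₀ j)
          _ = (∑ j, (M ^ k) i₀ j) * w0 im := by rw [Finset.sum_mul]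
      have h12 : (ρ + ε) ^ k * (w0 i₀ / w0 im) ≤ ∑ j, (M ^ k) i₀ j := by
        rw [← mul_div_assoc, div_le_iff₀ (hw0 im)]
        exact hsum
      exact h12.trans hrowR
    exact no_growth hρ0 hρmax (div_pos (hw0 i₀) (hw0 im))
      (lt_add_of_pos_right ρ hε) hgrow
  -- construct the normalized positive eigenvector
  set w0 : n → ℝ := Q.mulVec y with hw0def
  have hw0pos : ∀ i, 0 < w0 i := mulVec_pos hQpos hy hy0
  have hMw0 : M.mulVec w0 = ρ • w0 := by
    rw [hw0def, hcomm, hMy, Matrix.mulVec_smul]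
  set S := ∑ i, w0 i with hSdef
  have hS : 0 < S := Finset.sum_pos (fun i _ => hw0pos i) Finset.univ_nonempty
  set w : n → ℝ := fun i => w0 i / S with hwdef
  have hwpos : ∀ i, 0 < w i := fun i => div_pos (hw0pos i) hS
  have hwsum : ∑ i, w i = 1 := by
    rw [hwdef, ← Finset.sum_div, ← hSdef, div_self hS.ne']
  have hMw : M.mulVec w = ρ • w := by
    have hws : w = S⁻¹ • w0 := funext fun i => by
      rw [hwdef]; simp [div_eq_inv_mul]
    rw [hws, Matrix.mulVec_smul, hMw0, smul_comm]
  have hwne : w ≠ 0 := by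
    intro h
    exact absurd (congrFun h (Classical.arbitrary n)) (hwpos _).ne'
  refine ⟨ρ, w, hρ0, hwpos, hwsum, hMw, hρmax, ?_⟩
  intro γ y' hy'nn hy'0 hy'eig
  have hy2 : ∀ i, 0 < (Q.mulVec y') i := mulVec_pos hQpos hy'nn hy'0
  have hy2eig : M.mulVec (Q.mulVec y') = γ • Q.mulVec y' := by
    rw [hcomm, hy'eig, Matrix.mulVec_smul]
  have h1 : γ ≤ ρ := by
    have h := hρmax (γ : ℂ) (isEigC_of_real hy'0 hy'eig)
    rw [Complex.norm_real, Real.norm_eq_abs] at h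
    exact (le_abs_self γ).trans h
  have h2 : ρ ≤ γ := by
    have h := dominance hM hy2 hy2eig (ρ : ℂ) (isEigC_of_real hwne hMw)
    rwa [Complex.norm_real, Real.norm_of_nonneg hρ0] at h
  have hγ : γ = ρ := le_antisymm h1 h2
  refine ⟨hγ, ?_⟩
  obtain ⟨i1, -, hi1⟩ := Finset.exists_min_image Finset.univ (fun i => y' i / w i)
    ⟨Classical.arbitrary n, Finset.mem_univ _⟩
  set c := y' i1 / w i1 with hcdef
  set d2 : n → ℝ := fun i => y' i - c * w i with hd2def
  have hd2 : ∀ i, 0 ≤ d2 i := by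
    intro i
    have h := hi1 i (Finset.mem_univ i)
    have : c * w i ≤ y' i := by
      calc c * w i ≤ y' i / w i * w i := mul_le_mul_of_nonneg_right h (hwpos i).le
        _ = y' i := div_mul_cancel₀ _ (hwpos i).ne'
    simpa [hd2def, sub_nonneg] using this
  have hd2i1 : d2 i1 = 0 := by
    simp only [hd2def, hcdef, div_mul_cancel₀ _ (hwpos i1).ne', sub_self]
  have hd2eig : M.mulVec d2 = ρ • d2 := by
    have hd2' : d2 = y' - c • w := funext fun i => by simp [hd2def]
    rw [hd2', Matrix.mulVec_sub, Matrix.mulVec_smul, hy'eig, hγ, hMw, smul_sub,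
      smul_comm c ρ w]
  have hd2z : d2 = 0 := by
    by_contra hne
    have hpos := mulVec_pos hQpos hd2 hne i1
    rw [hQeig hd2eig, Pi.smul_apply, smul_eq_mul, hd2i1, mul_zero] at hpos
    exact lt_irrefl 0 hpos
  have hy'w : ∀ i, y' i = c * w i := by
    intro i
    have h := congrFun hd2z i
    simp only [hd2def, Pi.zero_apply, sub_eq_zero] at h
    exact h
  have hsumy : ∑ j, y' j = c := by
    calc ∑ j, y' j = ∑ j, c * w j := Finset.sum_congr rfl fun j _ => hy'w j
      _ = c * ∑ j, w j := by rw [Finset.mul_sum]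
      _ = c := by rw [hwsum, mul_one]
  funext i
  rw [hsumy, hy'w i]

/-- Positivity pattern transfer for matrix powers. -/
lemma pow_pos_transfer {A B : Matrix n n ℝ} (hA : ∀ i j, 0 ≤ A i j) (hB : ∀ i j, 0 ≤ B i j)
    (h : ∀ i j, 0 < A i j → 0 < B i j) (k : ℕ) :
    ∀ i j, 0 < (A ^ k) i j → 0 < (B ^ k) i j := by
  induction k with
  | zero => intro i j; rw [pow_zero, pow_zero]; exact id
  | succ k ih =>
      intro i j hpos
      rw [pow_succ, Matrix.mul_apply] at hpos
      obtain ⟨l, -, hl⟩ := Finset.exists_lt_of_sum_lt (f := fun _ => (0:ℝ)) (by simpa using hpos)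
      have h1 : 0 < (A ^ k) i l := by
        rcases (pow_entry_nonneg hA k i l).lt_or_eq with h' | h'
        · exact h'
        · rw [← h'] at hl; simp at hl
      have h2 : 0 < A l j := by
        rcases (hA l j).lt_or_eq with h' | h'
        · exact h'
        · rw [← h'] at hl; simp at hl
      rw [pow_succ, Matrix.mul_apply]
      exact Finset.sum_pos'
        (fun m _ => mul_nonneg (pow_entry_nonneg hB k i m) (hB m j))
        ⟨l, Finset.mem_univ l, mul_pos (ih i l h1) (h l j h2)⟩

end WCL

section Supra
open WCL
variable {N T : ℕ}

lemma supra_nonneg {C : Fin T → Matrix (Fin N) (Fin N) ℝ} {Atil : Matrix (Fin T) (Fin T) ℝ}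
    (hC : ∀ t i j, 0 ≤ C t i j) (hA : ∀ t t', 0 ≤ Atil t t') {ω : ℝ} (hω : 0 ≤ ω) :
    ∀ p q, 0 ≤ supraMat C Atil ω p q := by
  intro p q
  show (0:ℝ) ≤ (if p.1 = q.1 then C p.1 p.2 q.2 else 0) + ω * Atil p.1 q.1 * (if p.2 = q.2 then 1 else 0)
  have h1 : (0:ℝ) ≤ (if p.1 = q.1 then C p.1 p.2 q.2 else 0) := by
    split
    · exact hC _ _ _
    · exact le_refl 0
  have h2 : (0:ℝ) ≤ ω * Atil p.1 q.1 * (if p.2 = q.2 then 1 else 0) := by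
    have : (0:ℝ) ≤ (if p.2 = q.2 then (1:ℝ) else 0) := by positivity
    have := mul_nonneg (mul_nonneg hω (hA p.1 q.1)) this
    exact this
  linarith

lemma supra_irred {C : Fin T → Matrix (Fin N) (Fin N) ℝ} {Atil : Matrix (Fin T) (Fin T) ℝ}
    (hC : ∀ t i j, 0 < C t i j) (hA : ∀ t t', 0 ≤ Atil t t')
    (hA_irr : IsIrreducibleMat Atil) {ω : ℝ} (hω : 0 < ω) :
    IsIrreducibleMat (supraMat C Atil ω) := by
  have hMnn : ∀ p q, 0 ≤ supraMat C Atil ω p q :=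
    supra_nonneg (fun t i j => (hC t i j).le) hA hω.le
  have key : ∀ k : ℕ, ∀ t t' : Fin T, 0 < (Atil ^ k) t t' →
      ∀ i j : Fin N, 0 < ((supraMat C Atil ω) ^ (k+1)) (t, i) (t', j) := by
    intro k
    induction k with
    | zero =>
        intro t t' h i j
        have htt : t = t' := by
          by_contra hne
          rw [pow_zero, Matrix.one_apply_ne hne] at h
          exact lt_irrefl 0 h
        subst htt
        rw [pow_one]
        show 0 < (if t = t then C t i j else 0) + ω * Atil t t * (if i = j then 1 else 0)
        rw [if_pos rfl]
        have h0 : (0:ℝ) ≤ (if i = j then (1:ℝ) else 0) := by positivity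
        have h2 : (0:ℝ) ≤ ω * Atil t t * (if i = j then 1 else 0) :=
          mul_nonneg (mul_nonneg hω.le (hA t t)) h0
        linarith [hC t i j]
    | succ k ih =>
        intro t t' h i j
        rw [pow_succ', Matrix.mul_apply] at h
        obtain ⟨s, -, hs⟩ := Finset.exists_lt_of_sum_lt (f := fun _ => (0:ℝ)) (by simpa using h)
        have h1 : 0 < Atil t s := by
          rcases (hA t s).lt_or_eq with h' | h'
          · exact h'
          · rw [← h'] at hs; simp at hs
        have h2 : 0 < (Atil ^ k) s t' := by
          rcases (pow_entry_nonneg hA k s t').lt_or_eq with h' | h'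
          · exact h'
          · rw [← h'] at hs; simp at hs
        have hstep : 0 < supraMat C Atil ω (t, i) (s, i) := by
          show 0 < (if t = s then C t i i else 0) + ω * Atil t s * (if i = i then 1 else 0)
          have hpos : 0 < ω * Atil t s * (if i = i then (1:ℝ) else 0) := by
            rw [if_pos rfl, mul_one]; exact mul_pos hω h1
          have hnn : (0:ℝ) ≤ (if t = s then C t i i else 0) := by
            split
            · exact (hC _ _ _).le
            · exact le_refl 0
          linarith
        rw [show k + 1 + 1 = (k+1) + 1 from rfl, pow_succ', Matrix.mul_apply]
        exact Finset.sum_pos'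
          (fun m _ => mul_nonneg (hMnn _ _) (pow_entry_nonneg hMnn (k+1) _ _))
          ⟨(s, i), Finset.mem_univ _, mul_pos hstep (ih s t' h2 i j)⟩
  intro p q
  obtain ⟨k, hk⟩ := hA_irr p.1 q.1
  exact ⟨k + 1, key k p.1 q.1 hk p.2 q.2⟩

lemma sum_pair_collapse₁ {T N : ℕ} (t : Fin T) (f : Fin N → ℝ) (x : Fin T × Fin N → ℝ) :
    ∑ q : Fin T × Fin N, (if q.1 = t then f q.2 else 0) * x q = ∑ i, f i * x (t, i) := by
  rw [Fintype.sum_prod_type]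
  have h : ∀ s : Fin T, ∑ i, (if s = t then f i else 0) * x (s, i)
      = if s = t then ∑ i, f i * x (s, i) else 0 := by
    intro s
    split_ifs with h
    · simp [h]
    · simp [h]
  rw [Finset.sum_congr rfl fun s _ => h s, Finset.sum_ite_eq' Finset.univ t
    (fun s => ∑ i, f i * x (s, i)), if_pos (Finset.mem_univ t)]

lemma sum_pair_collapse₂ {T N : ℕ} (t : Fin T) (f : Fin N → ℝ) (x : Fin T × Fin N → ℝ) :
    ∑ q : Fin T × Fin N, (if t = q.1 then f q.2 else 0) * x q = ∑ i, f i * x (t, i) := by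
  rw [← sum_pair_collapse₁ t f x]
  exact Finset.sum_congr rfl fun q _ => by rw [show (if t = q.1 then f q.2 else 0)
    = (if q.1 = t then f q.2 else 0) from by simp [eq_comm]]

lemma sum_pair_kron {T N : ℕ} (g : Fin T → ℝ) (f : Fin N → ℝ) (x : Fin T × Fin N → ℝ) :
    ∑ q : Fin T × Fin N, g q.1 * f q.2 * x q = ∑ t', g t' * ∑ i, f i * x (t', i) := by
  rw [Fintype.sum_prod_type]
  exact Finset.sum_congr rfl fun s _ => by
    rw [Finset.mul_sum]
    exact Finset.sum_congr rfl fun i _ => by ring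

end Supra

/-- **Weak-coupling limit.** Suppose every layer matrix `C^(t)` is column-stochastic
with strictly positive entries (so its dominant eigenvalue is `1`, with PageRank vector
`v^(1,t)` and dominant left eigenvector `u^(1,t)`), and `Ã` is irreducible and
nonnegative. Then as `ω → 0⁺` the 1-norm-normalized dominant right eigenvector of
`C(ω)` converges to `∑_t α_t (e^(t) ⊗ v^(1,t))`, i.e. the vector with `(t,i)` entry
`α_t v^(1,t)_i`, where `α` is the 1-norm-normalized dominant eigenvector of the `T × T`
matrix `X_{tt'} = Ã_{tt'} ⟨u^(1,t), v^(1,t')⟩ / ⟨u^(1,t), v^(1,t)⟩`. -/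
theorem weak_coupling_limit {N T : ℕ} (hN : 0 < N) (hT : 0 < T)
    (C : Fin T → Matrix (Fin N) (Fin N) ℝ)
    (hC_pos : ∀ t i j, 0 < C t i j)
    (hC_col : ∀ t j, ∑ i, C t i j = 1)
    (Atil : Matrix (Fin T) (Fin T) ℝ) (hA : ∀ t t', 0 ≤ Atil t t')
    (hA_irr : IsIrreducibleMat Atil)
    (v : Fin T → Fin N → ℝ)
    (hv_pos : ∀ t i, 0 < v t i) (hv_sum : ∀ t, ∑ i, v t i = 1)
    (hv_eig : ∀ t, (C t).mulVec (v t) = v t)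
    (u : Fin T → Fin N → ℝ)
    (hu_pos : ∀ t i, 0 < u t i)
    (hu_eig : ∀ t, Matrix.vecMul (u t) (C t) = u t) :
    ∃ (α : Fin T → ℝ) (lam1 : ℝ) (lam : ℝ → ℝ) (V : ℝ → (Fin T × Fin N → ℝ)),
      (∀ t, 0 ≤ α t) ∧ (∑ t, α t = 1) ∧
      (Matrix.of fun t t' : Fin T =>
          Atil t t' * (∑ i, u t i * v t' i) / (∑ i, u t i * v t i)).mulVec α
        = lam1 • α ∧
      (∀ μ : ℂ, IsEigC (Matrix.of fun t t' : Fin T =>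
          Atil t t' * (∑ i, u t i * v t' i) / (∑ i, u t i * v t i)) μ →
        ‖μ‖ ≤ lam1) ∧
      (∀ ω : ℝ, 0 < ω →
        (supraMat C Atil ω).mulVec (V ω) = lam ω • V ω ∧
        (∀ z : ℂ, IsEigC (supraMat C Atil ω) z → ‖z‖ ≤ lam ω) ∧
        (∀ p, 0 < V ω p) ∧ (∑ p, V ω p = 1)) ∧
      Tendsto V (nhdsWithin 0 (Set.Ioi 0))
        (nhds fun p : Fin T × Fin N => α p.1 * v p.1 p.2) := by
  classical
  haveI : Nonempty (Fin T) := ⟨⟨0, hT⟩⟩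
  haveI : Nonempty (Fin N) := ⟨⟨0, hN⟩⟩
  have hS : ∀ t t' : Fin T, 0 < ∑ i, u t i * v t' i := fun t t' =>
    Finset.sum_pos (fun i _ => mul_pos (hu_pos t i) (hv_pos t' i)) Finset.univ_nonempty
  have hXnn : ∀ t t', 0 ≤ (Matrix.of fun t t' : Fin T =>
      Atil t t' * (∑ i, u t i * v t' i) / (∑ i, u t i * v t i)) t t' := fun t t' =>
    div_nonneg (mul_nonneg (hA t t') (hS t t').le) (hS t t).le
  have hXpos : ∀ t t', 0 < Atil t t' → 0 < (Matrix.of fun t t' : Fin T =>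
      Atil t t' * (∑ i, u t i * v t' i) / (∑ i, u t i * v t i)) t t' := fun t t' h =>
    div_pos (mul_pos h (hS t t')) (hS t t)
  have hXirr : IsIrreducibleMat (Matrix.of fun t t' : Fin T =>
      Atil t t' * (∑ i, u t i * v t' i) / (∑ i, u t i * v t i)) := fun t t' => by
    obtain ⟨k, hk⟩ := hA_irr t t'
    exact ⟨k, WCL.pow_pos_transfer hA hXnn hXpos k t t' hk⟩
  obtain ⟨lam1, α, hlam1nn, hαpos, hαsum, hαeig, hαdom, hαuniq⟩ := WCL.perron hXnn hXirr
  -- layer-wise uniqueness of the PageRank vector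
  have layer : ∀ t : Fin T, ∀ (γ : ℝ) (y : Fin N → ℝ), (∀ i, 0 ≤ y i) → y ≠ 0 →
      (C t).mulVec y = γ • y → γ = 1 ∧ y = fun i => (∑ j, y j) * v t i := by
    intro t
    have hCnn : ∀ i j, 0 ≤ C t i j := fun i j => (hC_pos t i j).le
    have hCirr : IsIrreducibleMat (C t) := fun i j =>
      ⟨1, by rw [pow_one]; exact hC_pos t i j⟩
    obtain ⟨l, w, -, hwpos, hwsum, hweig, -, huniq⟩ := WCL.perron hCnn hCirr
    have hvne : v t ≠ 0 := fun h =>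
      absurd (congrFun h ⟨0, hN⟩) (hv_pos t ⟨0, hN⟩).ne'
    have hv1 : (C t).mulVec (v t) = (1:ℝ) • v t := by rw [hv_eig t, one_smul]
    obtain ⟨hl1, hvw⟩ := huniq 1 (v t) (fun i => (hv_pos t i).le) hvne hv1
    have hwv : ∀ i, w i = v t i := by
      intro i
      have := congrFun hvw i
      rw [hv_sum t, one_mul] at this
      exact this.symm
    intro γ y hynn hy0 hyeig
    obtain ⟨hγ, hyw⟩ := huniq γ y hynn hy0 hyeig
    refine ⟨hγ.trans hl1.symm, ?_⟩
    funext i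
    rw [congrFun hyw i, hwv i]
  have main : ∀ ω : ℝ, ∃ lV : ℝ × (Fin T × Fin N → ℝ), 0 < ω →
      ((supraMat C Atil ω).mulVec lV.2 = lV.1 • lV.2 ∧
       (∀ z : ℂ, IsEigC (supraMat C Atil ω) z → ‖z‖ ≤ lV.1) ∧
       (∀ p, 0 < lV.2 p) ∧ (∑ p, lV.2 p = 1)) := by
    intro ω
    by_cases hω : 0 < ω
    · obtain ⟨l, w, -, hpos, hsum, heig, hdom, -⟩ :=
        WCL.perron (supra_nonneg (fun t i j => (hC_pos t i j).le) hA hω.le)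
          (supra_irred hC_pos hA hA_irr hω)
      exact ⟨(l, w), fun _ => ⟨heig, hdom, hpos, hsum⟩⟩
    · exact ⟨(0, fun _ => 0), fun h => absurd h hω⟩
  choose lV hlV using main
  refine ⟨α, lam1, fun ω => (lV ω).1, fun ω => (lV ω).2, fun t => (hαpos t).le, hαsum,
    hαeig, hαdom, fun ω hω => hlV ω hω, ?_⟩
  set V : ℝ → (Fin T × Fin N → ℝ) := fun ω => (lV ω).2 with hVdef
  set lam : ℝ → ℝ := fun ω => (lV ω).1 with hlamdef
  set a : Fin T → ℝ := fun t' => ∑ t, Atil t t' with hadef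
  have hann : ∀ t', 0 ≤ a t' := fun t' => Finset.sum_nonneg fun t _ => hA t t'
  -- the exact eigenvalue identity `lam ω = 1 + ω β(ω)`
  have hlamEq : ∀ ω : ℝ, 0 < ω →
      lam ω = 1 + ω * ∑ q : Fin T × Fin N, a q.1 * V ω q := by
    intro ω hω
    obtain ⟨heig, -, hpos, hsum⟩ := hlV ω hω
    have h1 : ∑ p, ((supraMat C Atil ω).mulVec (V ω)) p = lam ω := by
      rw [heig]
      have : ∑ p, (lam ω • V ω) p = lam ω * ∑ p, V ω p := by
        rw [Finset.mul_sum]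
        exact Finset.sum_congr rfl fun p _ => rfl
      rw [this, hsum, mul_one]
    have h2 : ∑ p, ((supraMat C Atil ω).mulVec (V ω)) p
        = ∑ q, (∑ p, supraMat C Atil ω p q) * V ω q := by
      simp_rw [Matrix.mulVec, dotProduct, Finset.sum_mul]
      exact Finset.sum_comm
    have hcol : ∀ q : Fin T × Fin N, ∑ p, supraMat C Atil ω p q = 1 + ω * a q.1 := by
      intro q
      have inner : ∀ t : Fin T, (∑ i : Fin N, supraMat C Atil ω (t, i) q)
          = (if t = q.1 then 1 else 0) + ω * Atil t q.1 := by
        intro t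
        show (∑ i : Fin N, ((if t = q.1 then C t i q.2 else 0)
          + ω * Atil t q.1 * (if i = q.2 then 1 else 0))) = _
        rw [Finset.sum_add_distrib]
        congr 1
        · split_ifs with h
          · rw [h]
            exact hC_col q.1 q.2
          · simp
        · rw [Finset.sum_congr rfl (fun i _ => show ω * Atil t q.1 * (if i = q.2 then (1:ℝ) else 0)
            = (if i = q.2 then ω * Atil t q.1 else 0) from by split_ifs <;> ring)]
          rw [Finset.sum_ite_eq' Finset.univ q.2 (fun _ => ω * Atil t q.1),
            if_pos (Finset.mem_univ q.2)]
      rw [Fintype.sum_prod_type, Finset.sum_congr rfl fun t _ => inner t,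
        Finset.sum_add_distrib, Finset.sum_ite_eq' Finset.univ q.1 (fun _ => (1:ℝ)),
        if_pos (Finset.mem_univ q.1), ← Finset.mul_sum]
    calc lam ω = ∑ q, (1 + ω * a q.1) * V ω q := by
          rw [← h1, h2]
          exact Finset.sum_congr rfl fun q _ => by rw [hcol q]
      _ = ∑ q, V ω q + ω * ∑ q, a q.1 * V ω q := by
          rw [Finset.mul_sum, ← Finset.sum_add_distrib]
          exact Finset.sum_congr rfl fun q _ => by ring
      _ = 1 + ω * ∑ q, a q.1 * V ω q := by rw [hsum]
  -- the left-eigenvector identity for each layer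
  have hUid : ∀ ω : ℝ, 0 < ω → ∀ t : Fin T,
      (lam ω - 1) * (∑ i, u t i * V ω (t, i))
        = ω * ∑ t', Atil t t' * ∑ i, u t i * V ω (t', i) := by
    intro ω hω t
    obtain ⟨heig, -, -, -⟩ := hlV ω hω
    set Ut : Fin T × Fin N → ℝ := fun q => if q.1 = t then u t q.2 else 0 with hUtdef
    have hkey : ∀ q' : Fin T × Fin N, Matrix.vecMul Ut (supraMat C Atil ω) q'
        = (if q'.1 = t then u t q'.2 else 0) + ω * (Atil t q'.1 * u t q'.2) := by
      intro q'
      have e1 : (∑ q : Fin T × Fin N, (if q.1 = t then u t q.2 else 0) * supraMat C Atil ω q q')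
          = ∑ i, u t i * supraMat C Atil ω (t, i) q' :=
        sum_pair_collapse₁ t (u t) fun q => supraMat C Atil ω q q'
      have e2 : (∑ i, u t i * supraMat C Atil ω (t, i) q')
          = (∑ i, u t i * (if t = q'.1 then C t i q'.2 else 0))
            + ∑ i, u t i * (ω * Atil t q'.1 * (if i = q'.2 then 1 else 0)) := by
        rw [← Finset.sum_add_distrib]
        exact Finset.sum_congr rfl fun i _ => by
          show u t i * ((if t = q'.1 then C t i q'.2 else 0)
            + ω * Atil t q'.1 * (if i = q'.2 then 1 else 0)) = _
          ring
      have e3 : (∑ i, u t i * (if t = q'.1 then C t i q'.2 else 0))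
          = (if q'.1 = t then u t q'.2 else 0) := by
        by_cases h : t = q'.1
        · rw [if_pos h.symm]
          have hvm := congrFun (hu_eig t) q'.2
          simp only [Matrix.vecMul, dotProduct] at hvm
          calc ∑ i, u t i * (if t = q'.1 then C t i q'.2 else 0)
              = ∑ i, u t i * C t i q'.2 := Finset.sum_congr rfl fun i _ => by rw [if_pos h]
            _ = u t q'.2 := hvm
        · rw [if_neg fun hh => h hh.symm]
          calc ∑ i, u t i * (if t = q'.1 then C t i q'.2 else 0)
              = ∑ i : Fin N, (0:ℝ) := Finset.sum_congr rfl fun i _ => by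
                rw [if_neg h, mul_zero]
            _ = 0 := Finset.sum_const_zero
      have e4 : (∑ i, u t i * (ω * Atil t q'.1 * (if i = q'.2 then 1 else 0)))
          = ω * (Atil t q'.1 * u t q'.2) := by
        calc (∑ i, u t i * (ω * Atil t q'.1 * (if i = q'.2 then 1 else 0)))
            = ∑ i, (if i = q'.2 then ω * (Atil t q'.1 * u t i) else 0) :=
              Finset.sum_congr rfl fun i _ => by split_ifs <;> ring
          _ = ω * (Atil t q'.1 * u t q'.2) := by
              rw [Finset.sum_ite_eq' Finset.univ q'.2 (fun i => ω * (Atil t q'.1 * u t i)),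
                if_pos (Finset.mem_univ q'.2)]
      calc Matrix.vecMul Ut (supraMat C Atil ω) q'
          = ∑ i, u t i * supraMat C Atil ω (t, i) q' := e1
        _ = _ := by rw [e2, e3, e4]
    have h0 : Ut ⬝ᵥ ((supraMat C Atil ω).mulVec (V ω)) = Ut ⬝ᵥ (lam ω • V ω) :=
      congrArg (fun x => Ut ⬝ᵥ x) heig
    have hLHS : Ut ⬝ᵥ ((supraMat C Atil ω).mulVec (V ω))
        = (∑ i, u t i * V ω (t, i)) + ω * ∑ t', Atil t t' * ∑ i, u t i * V ω (t', i) := by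
      rw [Matrix.dotProduct_mulVec]
      calc Matrix.vecMul Ut (supraMat C Atil ω) ⬝ᵥ V ω
          = ∑ q' : Fin T × Fin N, ((if q'.1 = t then u t q'.2 else 0)
              + ω * (Atil t q'.1 * u t q'.2)) * V ω q' :=
            Finset.sum_congr rfl fun q' _ => by rw [hkey q']
        _ = (∑ q' : Fin T × Fin N, (if q'.1 = t then u t q'.2 else 0) * V ω q')
            + ∑ q' : Fin T × Fin N, ω * (Atil t q'.1 * u t q'.2) * V ω q' := by
            rw [← Finset.sum_add_distrib]
            exact Finset.sum_congr rfl fun q' _ => add_mul _ _ _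
        _ = (∑ i, u t i * V ω (t, i)) + ω * ∑ t', Atil t t' * ∑ i, u t i * V ω (t', i) := by
            congr 1
            · exact sum_pair_collapse₁ t (u t) (V ω)
            · calc ∑ q' : Fin T × Fin N, ω * (Atil t q'.1 * u t q'.2) * V ω q'
                  = ω * ∑ q' : Fin T × Fin N, Atil t q'.1 * u t q'.2 * V ω q' := by
                    rw [Finset.mul_sum]
                    exact Finset.sum_congr rfl fun q' _ => by ring
                _ = ω * ∑ t', Atil t t' * ∑ i, u t i * V ω (t', i) := by
                    rw [sum_pair_kron (Atil t) (u t) (V ω)]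
    have hRHS : Ut ⬝ᵥ (lam ω • V ω) = lam ω * ∑ i, u t i * V ω (t, i) := by
      calc Ut ⬝ᵥ (lam ω • V ω)
          = ∑ q : Fin T × Fin N, (if q.1 = t then u t q.2 else 0) * (lam ω * V ω q) := rfl
        _ = lam ω * ∑ q : Fin T × Fin N, (if q.1 = t then u t q.2 else 0) * V ω q := by
            rw [Finset.mul_sum]
            exact Finset.sum_congr rfl fun q _ => by ring
        _ = lam ω * ∑ i, u t i * V ω (t, i) := by rw [sum_pair_collapse₁ t (u t) (V ω)]
    rw [hLHS, hRHS] at h0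
    linear_combination -h0
  -- the limit function
  set L : Fin T × Fin N → ℝ := fun p => α p.1 * v p.1 p.2 with hLdef
  set B : ℝ := ∑ q : Fin T × Fin N, a q.1 with hBdef
  -- key subsequence lemma
  have IH : ∀ ωs : ℕ → ℝ, (∀ k, 0 < ωs k) → Tendsto ωs atTop (nhds 0) →
      ∃ φ : ℕ → ℕ, Tendsto (fun i => V (ωs (φ i))) atTop (nhds L) := by
    intro ωs hωpos hωlim
    -- values live in a compact cube
    have hmem : ∀ k, V (ωs k) ∈ Set.univ.pi fun _ : Fin T × Fin N => Set.Icc (0:ℝ) 1 := by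
      intro k
      obtain ⟨-, -, hp, hs⟩ := hlV _ (hωpos k)
      rw [Set.mem_univ_pi]
      intro q
      exact ⟨(hp q).le, (Finset.single_le_sum (fun p _ => (hp p).le)
        (Finset.mem_univ q)).trans_eq hs⟩
    obtain ⟨wlim, hwK, φ1, hφ1, hVlim1⟩ :=
      (isCompact_univ_pi fun _ : Fin T × Fin N => isCompact_Icc).tendsto_subseq hmem
    -- the derivative-like quantity β is bounded
    set β : ℕ → ℝ := fun k => ∑ q : Fin T × Fin N, a q.1 * V (ωs k) q with hβdef
    have hβmem : ∀ i, β (φ1 i) ∈ Set.Icc (0:ℝ) B := by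
      intro i
      obtain ⟨-, -, hp, hs⟩ := hlV _ (hωpos (φ1 i))
      constructor
      · exact Finset.sum_nonneg fun q _ => mul_nonneg (hann q.1) (hp q).le
      · rw [hBdef]
        refine Finset.sum_le_sum fun q _ => ?_
        have hq1 : V (ωs (φ1 i)) q ≤ 1 := (Finset.single_le_sum
          (fun p _ => (hp p).le) (Finset.mem_univ q)).trans_eq hs
        calc a q.1 * V (ωs (φ1 i)) q ≤ a q.1 * 1 :=
              mul_le_mul_of_nonneg_left hq1 (hann q.1)
          _ = a q.1 := mul_one _
    obtain ⟨blim, -, φ2, hφ2, hβlim⟩ :=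
      tendsto_subseq_of_bounded (Metric.isBounded_Icc (0:ℝ) B) hβmem
    set φ : ℕ → ℕ := φ1 ∘ φ2 with hφdef
    have hφat : Tendsto φ atTop atTop := (hφ1.comp hφ2).tendsto_atTop
    have hω' : Tendsto (fun i => ωs (φ i)) atTop (nhds 0) := hωlim.comp hφat
    have hV' : Tendsto (fun i => V (ωs (φ i))) atTop (nhds wlim) :=
      hVlim1.comp hφ2.tendsto_atTop
    have hβ' : Tendsto (fun i => β (φ i)) atTop (nhds blim) := hβlim
    have hVq : ∀ q, Tendsto (fun i => V (ωs (φ i)) q) atTop (nhds (wlim q)) := fun q =>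
      (continuous_apply q).continuousAt.tendsto.comp hV'
    have hlam' : Tendsto (fun i => lam (ωs (φ i))) atTop (nhds 1) := by
      have heq : (fun i => lam (ωs (φ i))) = fun i => 1 + ωs (φ i) * β (φ i) :=
        funext fun i => hlamEq _ (hωpos _)
      rw [heq]
      have : Tendsto (fun i => 1 + ωs (φ i) * β (φ i)) atTop (nhds (1 + 0 * blim)) :=
        tendsto_const_nhds.add (hω'.mul hβ')
      simpa using this
    -- properties of the limit point
    have hw_nonneg : ∀ q, 0 ≤ wlim q := fun q => (hwK q (Set.mem_univ q)).1
    have hw_sum : ∑ q, wlim q = 1 := by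
      have h1 : Tendsto (fun i => ∑ q, V (ωs (φ i)) q) atTop (nhds (∑ q, wlim q)) :=
        tendsto_finset_sum _ fun q _ => hVq q
      have h2 : (fun i => ∑ q, V (ωs (φ i)) q) = fun _ => (1:ℝ) :=
        funext fun i => (hlV _ (hωpos _)).2.2.2
      rw [h2] at h1
      exact tendsto_nhds_unique h1 tendsto_const_nhds
    -- the limit point satisfies the decoupled eigenproblem
    have hlayer_eq : ∀ t : Fin T, (C t).mulVec (fun i => wlim (t, i)) = fun i => wlim (t, i) := by
      intro t
      funext j
      have hcoord : ∀ i : ℕ,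
          (∑ q : Fin T × Fin N, (if t = q.1 then C t j q.2 else 0) * V (ωs (φ i)) q)
            + ωs (φ i) * ∑ q : Fin T × Fin N, Atil t q.1 * (if j = q.2 then 1 else 0)
              * V (ωs (φ i)) q
          = lam (ωs (φ i)) * V (ωs (φ i)) (t, j) := by
        intro i
        have heig := (hlV _ (hωpos (φ i))).1
        have h2 : ∑ q : Fin T × Fin N, supraMat C Atil (ωs (φ i)) (t, j) q * V (ωs (φ i)) q
            = (∑ q : Fin T × Fin N, (if t = q.1 then C t j q.2 else 0) * V (ωs (φ i)) q)
              + ωs (φ i) * ∑ q : Fin T × Fin N, Atil t q.1 * (if j = q.2 then 1 else 0)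
                * V (ωs (φ i)) q := by
          rw [Finset.mul_sum, ← Finset.sum_add_distrib]
          exact Finset.sum_congr rfl fun q _ => by
            show ((if t = q.1 then C t j q.2 else 0)
              + ωs (φ i) * Atil t q.1 * (if j = q.2 then 1 else 0)) * V (ωs (φ i)) q = _
            ring
        calc (∑ q : Fin T × Fin N, (if t = q.1 then C t j q.2 else 0) * V (ωs (φ i)) q)
              + ωs (φ i) * ∑ q : Fin T × Fin N, Atil t q.1 * (if j = q.2 then 1 else 0)
                * V (ωs (φ i)) q
            = ∑ q : Fin T × Fin N, supraMat C Atil (ωs (φ i)) (t, j) q * V (ωs (φ i)) q :=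
              h2.symm
          _ = ((supraMat C Atil (ωs (φ i))).mulVec (V (ωs (φ i)))) (t, j) := rfl
          _ = lam (ωs (φ i)) * V (ωs (φ i)) (t, j) := by rw [heig]; rfl
      have hT1 : Tendsto (fun i => lam (ωs (φ i)) * V (ωs (φ i)) (t, j)) atTop
          (nhds (1 * wlim (t, j))) := hlam'.mul (hVq (t, j))
      have hlim1 : Tendsto
          (fun i => ∑ q : Fin T × Fin N, (if t = q.1 then C t j q.2 else 0) * V (ωs (φ i)) q)
          atTop (nhds (∑ q : Fin T × Fin N, (if t = q.1 then C t j q.2 else 0) * wlim q)) :=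
        tendsto_finset_sum _ fun q _ => (hVq q).const_mul _
      have hlim2 : Tendsto
          (fun i => ωs (φ i) * ∑ q : Fin T × Fin N, Atil t q.1 * (if j = q.2 then 1 else 0)
            * V (ωs (φ i)) q)
          atTop (nhds (0 * ∑ q : Fin T × Fin N, Atil t q.1 * (if j = q.2 then 1 else 0)
            * wlim q)) :=
        hω'.mul (tendsto_finset_sum _ fun q _ => (hVq q).const_mul _)
      have hT2 : Tendsto (fun i => lam (ωs (φ i)) * V (ωs (φ i)) (t, j)) atTop
          (nhds ((∑ q : Fin T × Fin N, (if t = q.1 then C t j q.2 else 0) * wlim q)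
            + 0 * ∑ q : Fin T × Fin N, Atil t q.1 * (if j = q.2 then 1 else 0) * wlim q)) := by
        have hfun : (fun i => (∑ q : Fin T × Fin N, (if t = q.1 then C t j q.2 else 0)
            * V (ωs (φ i)) q) + ωs (φ i) * ∑ q : Fin T × Fin N, Atil t q.1
              * (if j = q.2 then 1 else 0) * V (ωs (φ i)) q)
            = fun i => lam (ωs (φ i)) * V (ωs (φ i)) (t, j) := funext hcoord
        rw [← hfun]
        exact hlim1.add hlim2
      have hkey := tendsto_nhds_unique hT2 hT1
      rw [zero_mul, add_zero, one_mul] at hkey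
      show (∑ i : Fin N, C t j i * wlim (t, i)) = wlim (t, j)
      rw [← sum_pair_collapse₂ t (fun i => C t j i) wlim]
      exact hkey
    -- decompose the limit into layers
    set c : Fin T → ℝ := fun t => ∑ i, wlim (t, i) with hcdef
    have hw_struct : ∀ t i, wlim (t, i) = c t * v t i := by
      intro t i
      by_cases h : (fun i => wlim (t, i)) = 0
      · have hct : c t = 0 := by
          rw [hcdef]
          simp only []
          rw [Finset.sum_congr rfl fun i _ => congrFun h i]
          exact Finset.sum_const_zero
        rw [hct, zero_mul]
        exact congrFun h i
      · obtain ⟨-, h2⟩ := layer t 1 (fun i => wlim (t, i)) (fun i => hw_nonneg _) h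
          (by rw [hlayer_eq t, one_smul])
        exact congrFun h2 i
    have hc_nonneg : ∀ t, 0 ≤ c t := fun t => Finset.sum_nonneg fun i _ => hw_nonneg _
    have hc_sum : ∑ t, c t = 1 := by
      rw [← hw_sum, Fintype.sum_prod_type]
    have hc_ne : c ≠ 0 := by
      intro h
      rw [h] at hc_sum
      simp at hc_sum
    -- the eigenvalue equation for `c`
    have hidlim : ∀ t : Fin T, blim * (c t * ∑ i, u t i * v t i)
        = ∑ t', Atil t t' * (c t' * ∑ i, u t i * v t' i) := by
      intro t
      have hid : ∀ i : ℕ, β (φ i) * (∑ k, u t k * V (ωs (φ i)) (t, k))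
          = ∑ t', Atil t t' * ∑ k, u t k * V (ωs (φ i)) (t', k) := by
        intro i
        have h := hUid (ωs (φ i)) (hωpos _) t
        rw [hlamEq (ωs (φ i)) (hωpos _)] at h
        have h' : ωs (φ i) * (β (φ i) * (∑ k, u t k * V (ωs (φ i)) (t, k)))
            = ωs (φ i) * ∑ t', Atil t t' * ∑ k, u t k * V (ωs (φ i)) (t', k) := by
          rw [hβdef]
          linear_combination h
        exact mul_left_cancel₀ (hωpos (φ i)).ne' h'
      have hTa : Tendsto (fun i => β (φ i) * (∑ k, u t k * V (ωs (φ i)) (t, k))) atTop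
          (nhds (blim * ∑ k, u t k * wlim (t, k))) :=
        hβ'.mul (tendsto_finset_sum _ fun k _ => (hVq (t, k)).const_mul _)
      have hTb : Tendsto (fun i => ∑ t', Atil t t' * ∑ k, u t k * V (ωs (φ i)) (t', k)) atTop
          (nhds (∑ t', Atil t t' * ∑ k, u t k * wlim (t', k))) :=
        tendsto_finset_sum _ fun t' _ =>
          (tendsto_finset_sum _ fun k _ => (hVq (t', k)).const_mul _).const_mul _
      have heqfun : (fun i => β (φ i) * (∑ k, u t k * V (ωs (φ i)) (t, k)))
          = fun i => ∑ t', Atil t t' * ∑ k, u t k * V (ωs (φ i)) (t', k) := funext hid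
      rw [heqfun] at hTa
      have hkey := tendsto_nhds_unique hTa hTb
      calc blim * (c t * ∑ i, u t i * v t i)
          = blim * ∑ k, u t k * wlim (t, k) := by
            congr 1
            rw [Finset.mul_sum]
            exact Finset.sum_congr rfl fun k _ => by rw [hw_struct t k]; ring
        _ = ∑ t', Atil t t' * ∑ k, u t k * wlim (t', k) := hkey
        _ = ∑ t', Atil t t' * (c t' * ∑ i, u t i * v t' i) := by
            refine Finset.sum_congr rfl fun t' _ => ?_
            congr 1
            rw [Finset.mul_sum]
            exact Finset.sum_congr rfl fun k _ => by rw [hw_struct t' k]; ring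
    have hXc : (Matrix.of fun t t' : Fin T =>
        Atil t t' * (∑ i, u t i * v t' i) / (∑ i, u t i * v t i)).mulVec c = blim • c := by
      funext t
      show (∑ t', Atil t t' * (∑ i, u t i * v t' i) / (∑ i, u t i * v t i) * c t') = blim * c t
      have hst : (∑ i, u t i * v t i) ≠ 0 := (hS t t).ne'
      rw [show (∑ t', Atil t t' * (∑ i, u t i * v t' i) / (∑ i, u t i * v t i) * c t')
          = (∑ t', Atil t t' * (c t' * ∑ i, u t i * v t' i)) / (∑ i, u t i * v t i) from by
        rw [Finset.sum_div]
        exact Finset.sum_congr rfl fun t' _ => by field_simp]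
      rw [← hidlim t]
      field_simp
    obtain ⟨-, hcα⟩ := hαuniq blim c hc_nonneg hc_ne hXc
    have hwL : wlim = L := by
      funext p
      rw [hLdef]
      show wlim (p.1, p.2) = α p.1 * v p.1 p.2
      rw [hw_struct p.1 p.2, congrFun hcα p.1, hc_sum, one_mul]
    exact ⟨φ, hwL ▸ hV'⟩
  -- conclude via the subsequence criterion
  refine tendsto_of_subseq_tendsto fun ns hns => ?_
  have h1 : Tendsto ns atTop (nhds 0) := hns.mono_right nhdsWithin_le_nhds
  have h2 : ∀ᶠ k in atTop, 0 < ns k :=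
    hns.eventually (eventually_mem_nhdsWithin.mono fun x hx => hx)
  obtain ⟨k0, hk0⟩ := eventually_atTop.mp h2
  have hgpos : ∀ k, 0 < ns (k + k0) := fun k => hk0 _ (Nat.le_add_left k0 k)
  have hg0 : Tendsto (fun k => ns (k + k0)) atTop (nhds 0) :=
    h1.comp (tendsto_add_atTop_nat k0)
  obtain ⟨φ, hφlim⟩ := IH (fun k => ns (k + k0)) hgpos hg0
  exact ⟨fun i => φ i + k0, hφlim⟩
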